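/- For every real k ≠ 0, the matrix A(k) is positive definite; consequently det A(k) > 0 and A(k) is invertible. -/

import Mathlib

/-- hyperbolic cotangent, `coth x = cosh x / sinh x` (for `x ≠ 0`). -/
noncomputable def coth (x : ℝ) : ℝ := Real.cosh x / Real.sinh x

/-- hyperbolic cosecant, `csch x = 1 / sinh x` (for `x ≠ 0`). -/
noncomputable def csch (x : ℝ) : ℝ := 1 / Real.sinh x

/-- The symmetric tridiagonal matrix `A(k)` of the linearised fluid-loaded plate problem.
Rows/columns are indexed by `i : Fin n`, corresponding to the 1-based index `i+1`; the plate
separations are `Δh 0, …, Δh n`.  The 1-based entries are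
`A(k)_{ii} = (k + coth(kΔh_{i−1}) + coth(kΔhᵢ))/k` and
`A(k)_{i,i+1} = A(k)_{i+1,i} = −csch(kΔhᵢ)/k`. -/
noncomputable def Amat (n : ℕ) (Δh : ℕ → ℝ) (k : ℝ) : Matrix (Fin n) (Fin n) ℝ :=
  fun i j =>
    if (i : ℕ) = (j : ℕ) then (k + coth (k * Δh (i : ℕ)) + coth (k * Δh ((i : ℕ) + 1))) / k
    else if (i : ℕ) + 1 = (j : ℕ) then -(csch (k * Δh ((i : ℕ) + 1)) / k)
    else if (j : ℕ) + 1 = (i : ℕ) then -(csch (k * Δh ((j : ℕ) + 1)) / k)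
    else 0

/-- The symmetric tridiagonal matrix `B(k)`, with 1-based entries
`B(k)_{ii} = U_{i−1}² coth(kΔh_{i−1}) + Uᵢ² coth(kΔhᵢ)` and
`B(k)_{i,i+1} = B(k)_{i+1,i} = −Uᵢ² csch(kΔhᵢ)`. -/
noncomputable def Bmat (n : ℕ) (Δh U : ℕ → ℝ) (k : ℝ) : Matrix (Fin n) (Fin n) ℝ :=
  fun i j =>
    if (i : ℕ) = (j : ℕ) then
      U (i : ℕ) ^ 2 * coth (k * Δh (i : ℕ)) + U ((i : ℕ) + 1) ^ 2 * coth (k * Δh ((i : ℕ) + 1))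
    else if (i : ℕ) + 1 = (j : ℕ) then -(U ((i : ℕ) + 1) ^ 2 * csch (k * Δh ((i : ℕ) + 1)))
    else if (j : ℕ) + 1 = (i : ℕ) then -(U ((j : ℕ) + 1) ^ 2 * csch (k * Δh ((j : ℕ) + 1)))
    else 0

/-- The symmetric tridiagonal matrix `C(k)`, with 1-based entries
`C(k)_{ii} = U_{i−1} coth(kΔh_{i−1}) + Uᵢ coth(kΔhᵢ)` and
`C(k)_{i,i+1} = C(k)_{i+1,i} = −Uᵢ csch(kΔhᵢ)`. -/
noncomputable def Cmat (n : ℕ) (Δh U : ℕ → ℝ) (k : ℝ) : Matrix (Fin n) (Fin n) ℝ :=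
  fun i j =>
    if (i : ℕ) = (j : ℕ) then
      U (i : ℕ) * coth (k * Δh (i : ℕ)) + U ((i : ℕ) + 1) * coth (k * Δh ((i : ℕ) + 1))
    else if (i : ℕ) + 1 = (j : ℕ) then -(U ((i : ℕ) + 1) * csch (k * Δh ((i : ℕ) + 1)))
    else if (j : ℕ) + 1 = (i : ℕ) then -(U ((j : ℕ) + 1) * csch (k * Δh ((j : ℕ) + 1)))
    else 0

/-- The complex `2n × 2n` block matrix
`M(k) = [[0, Iₙ], [A(k)⁻¹(k B(k) − k⁴ Iₙ), −2i A(k)⁻¹ C(k)]]`,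
real matrices being regarded as complex. -/
noncomputable def Mmat (n : ℕ) (Δh U : ℕ → ℝ) (k : ℝ) :
    Matrix (Fin n ⊕ Fin n) (Fin n ⊕ Fin n) ℂ :=
  Matrix.fromBlocks 0 1
    (((Amat n Δh k)⁻¹ *
        (k • Bmat n Δh U k - k ^ 4 • (1 : Matrix (Fin n) (Fin n) ℝ))).map
      (fun x : ℝ => (x : ℂ)))
    ((-2 * Complex.I) • ((Amat n Δh k)⁻¹ * Cmat n Δh U k).map (fun x : ℝ => (x : ℂ)))

open Matrix Finset in
/-- A real symmetric strictly diagonally dominant matrix (with positive diagonal implied)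
is positive definite. -/
lemma posDef_of_dominant {m : Type*} [Fintype m] [DecidableEq m] (A : Matrix m m ℝ)
    (hsym : A.IsHermitian)
    (hdom : ∀ i, ∑ j ∈ univ.erase i, |A i j| < A i i) : A.PosDef := by
  have habs : ∀ i j, |A j i| = |A i j| := fun i j => by
    rw [show A j i = A i j from by
      have := congrFun (congrFun hsym j) i
      simpa [Matrix.conjTranspose_apply] using this.symm]
  refine Matrix.PosDef.of_dotProduct_mulVec_pos hsym fun x hx => ?_
  have hexp : dotProduct (star x) (A *ᵥ x) = ∑ i, ∑ j, x i * (A i j * x j) := by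
    simp [dotProduct, Matrix.mulVec, Finset.mul_sum]
  set F : m → m → ℝ := fun i j => x i * (A i j * x j) with hF
  set S1 : ℝ := ∑ i, ∑ j ∈ univ.erase i, F i j with hS1
  set S2 : ℝ := ∑ i, ∑ j ∈ univ.erase i, |A i j| * x i ^ 2 with hS2
  set S2' : ℝ := ∑ i, ∑ j ∈ univ.erase i, |A i j| * x j ^ 2 with hS2'
  have e1 : ∀ (G : m → m → ℝ), (∑ i, ∑ j ∈ univ.erase i, G i j)
      = ∑ i, ∑ j, (if j = i then 0 else G i j) := by
    intro G
    refine Finset.sum_congr rfl fun i _ => ?_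
    rw [show (∑ j, if j = i then 0 else G i j)
        = ∑ j ∈ univ.erase i, (if j = i then 0 else G i j) from
      (Finset.sum_erase _ (by simp)).symm]
    exact Finset.sum_congr rfl fun j hj => (if_neg (Finset.ne_of_mem_erase hj)).symm
  have hswap : S2 = S2' := by
    rw [hS2, hS2', e1, e1, Finset.sum_comm]
    refine Finset.sum_congr rfl fun i _ => Finset.sum_congr rfl fun j _ => ?_
    by_cases h : i = j
    · simp [h]
    · rw [if_neg h, if_neg (Ne.symm h), habs]
  have hsplit : dotProduct (star x) (A *ᵥ x) = (∑ i, A i i * x i ^ 2) + S1 := by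
    rw [hexp, hS1, ← Finset.sum_add_distrib]
    refine Finset.sum_congr rfl fun i _ => ?_
    rw [← Finset.add_sum_erase (univ) (fun j => F i j) (Finset.mem_univ i), hF]
    ring_nf
  have hnn : 0 ≤ ∑ i, ∑ j ∈ univ.erase i,
      (2 * F i j + |A i j| * x i ^ 2 + |A i j| * x j ^ 2) := by
    refine Finset.sum_nonneg fun i _ => Finset.sum_nonneg fun j _ => ?_
    have h1 : A i j ≤ |A i j| := le_abs_self _
    have h2 : -|A i j| ≤ A i j := neg_abs_le _
    simp only [hF]
    nlinarith [sq_nonneg (x i + x j), sq_nonneg (x i - x j), abs_nonneg (A i j)]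
  have hsum_eq : (∑ i, ∑ j ∈ univ.erase i,
      (2 * F i j + |A i j| * x i ^ 2 + |A i j| * x j ^ 2)) = 2 * S1 + S2 + S2' := by
    rw [hS1, hS2, hS2', Finset.mul_sum, ← Finset.sum_add_distrib, ← Finset.sum_add_distrib]
    refine Finset.sum_congr rfl fun i _ => ?_
    rw [Finset.mul_sum, ← Finset.sum_add_distrib, ← Finset.sum_add_distrib]
  have hkey : (∑ i, (A i i - ∑ j ∈ univ.erase i, |A i j|) * x i ^ 2)
      ≤ dotProduct (star x) (A *ᵥ x) := by
    have h0 : 0 ≤ S1 + S2 := by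
      have := hnn
      rw [hsum_eq, ← hswap] at this
      linarith
    have hL : (∑ i, (A i i - ∑ j ∈ univ.erase i, |A i j|) * x i ^ 2)
        = (∑ i, A i i * x i ^ 2) - S2 := by
      rw [hS2, ← Finset.sum_sub_distrib]
      refine Finset.sum_congr rfl fun i _ => ?_
      rw [sub_mul, Finset.sum_mul]
    rw [hL, hsplit]
    linarith
  refine lt_of_lt_of_le ?_ hkey
  obtain ⟨i, hi⟩ := Function.ne_iff.mp hx
  refine Finset.sum_pos' (fun j _ => ?_) ⟨i, Finset.mem_univ i, ?_⟩
  · exact mul_nonneg (le_of_lt (sub_pos.2 (hdom j))) (sq_nonneg _)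
  · exact mul_pos (sub_pos.2 (hdom i)) (pow_two_pos_of_ne_zero hi)

lemma ksinh_pos {k t : ℝ} (hk : k ≠ 0) (ht : 0 < t) : 0 < Real.sinh (k * t) * k := by
  rcases hk.lt_or_gt with h | h
  · have h1 : k * t < 0 := mul_neg_of_neg_of_pos h ht
    exact mul_pos_of_neg_of_neg (Real.sinh_neg_iff.2 h1) h
  · exact mul_pos (Real.sinh_pos_iff.2 (mul_pos h ht)) h

lemma csch_div_pos {k t : ℝ} (hk : k ≠ 0) (ht : 0 < t) : 0 < csch (k * t) / k := by
  rw [csch, div_div]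
  exact div_pos one_pos (ksinh_pos hk ht)

lemma coth_div_pos {k t : ℝ} (hk : k ≠ 0) (ht : 0 < t) : 0 < coth (k * t) / k := by
  rw [coth, div_div]
  exact div_pos (Real.cosh_pos _) (ksinh_pos hk ht)

lemma csch_le_coth {k t : ℝ} (hk : k ≠ 0) (ht : 0 < t) :
    csch (k * t) / k ≤ coth (k * t) / k := by
  rw [csch, coth, div_div, div_div]
  have hd := ksinh_pos hk ht
  gcongr
  exact Real.one_le_cosh _

open Finset in
lemma sum_ite_le {α : Type*} [Fintype α] [DecidableEq α] (P : α → Prop) [DecidablePred P]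
    (hP : ∀ a b, P a → P b → a = b) {c : ℝ} (hc : 0 ≤ c) :
    (∑ j, (if P j then c else 0)) ≤ c := by
  by_cases h : ∃ a, P a
  · obtain ⟨a, ha⟩ := h
    have he : ∀ j, (if P j then c else 0) = if j = a then c else 0 := fun j => by
      by_cases hj : P j
      · rw [if_pos hj, if_pos (hP j a hj ha)]
      · rw [if_neg hj, if_neg (fun e => hj (by rw [e]; exact ha))]
    simp [he]
  · push_neg at h
    simp [h, hc]

theorem statement5 (n : ℕ) (hn : 1 ≤ n) (Δh : ℕ → ℝ) (hΔh : ∀ i ≤ n, 0 < Δh i)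
    (k : ℝ) (hk : k ≠ 0) :
    (Amat n Δh k).PosDef ∧ 0 < (Amat n Δh k).det ∧ IsUnit (Amat n Δh k) := by
  have hA : (Amat n Δh k).PosDef := by
    apply posDef_of_dominant
    · -- symmetry
      ext i j
      rcases Nat.lt_trichotomy (i : ℕ) (j : ℕ) with h | h | h
      · have h1 : (j : ℕ) ≠ (i : ℕ) := by omega
        have h2 : ¬((j : ℕ) + 1 = (i : ℕ)) := by omega
        simp [Amat, Matrix.conjTranspose_apply, h1, h2, h.ne]
      · have : i = j := Fin.ext h
        subst this
        simp [Amat, Matrix.conjTranspose_apply]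
      · have h1 : ¬((i : ℕ) = (j : ℕ)) := by omega
        have h2 : ¬((i : ℕ) + 1 = (j : ℕ)) := by omega
        simp [Amat, Matrix.conjTranspose_apply, h1, h2, h.ne]
    · -- strict diagonal dominance
      intro i
      have hΔ1 : 0 < Δh (i : ℕ) := hΔh _ (le_of_lt i.isLt)
      have hΔ2 : 0 < Δh ((i : ℕ) + 1) := hΔh _ i.isLt
      have hc1 := coth_div_pos hk hΔ1
      have hc2 := coth_div_pos hk hΔ2
      have hs1 := csch_div_pos hk hΔ1
      have hs2 := csch_div_pos hk hΔ2
      have hdiag : Amat n Δh k i i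
          = 1 + coth (k * Δh (i : ℕ)) / k + coth (k * Δh ((i : ℕ) + 1)) / k := by
        have h0 : Amat n Δh k i i
            = (k + coth (k * Δh (i : ℕ)) + coth (k * Δh ((i : ℕ) + 1))) / k := by
          simp [Amat]
        rw [h0, add_div, add_div, div_self hk]
      have hle : ∀ j ∈ Finset.univ.erase i, |Amat n Δh k i j|
          ≤ (if (j : ℕ) + 1 = (i : ℕ) then csch (k * Δh (i : ℕ)) / k else 0)
            + (if (i : ℕ) + 1 = (j : ℕ) then csch (k * Δh ((i : ℕ) + 1)) / k else 0) := by
        intro j hj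
        have hne : ¬((i : ℕ) = (j : ℕ)) := fun h =>
          (Finset.ne_of_mem_erase hj) (Fin.ext h).symm
        simp only [Amat, if_neg hne]
        by_cases h2 : (i : ℕ) + 1 = (j : ℕ)
        · have h3 : ¬((j : ℕ) + 1 = (i : ℕ)) := by omega
          rw [if_pos h2, if_pos h2, if_neg h3, abs_neg, abs_of_pos hs2]
          linarith
        · rw [if_neg h2, if_neg h2]
          by_cases h3 : (j : ℕ) + 1 = (i : ℕ)
          · rw [if_pos h3, if_pos h3, h3, abs_neg, abs_of_pos hs1]
            linarith
          · rw [if_neg h3, if_neg h3]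
            simp
      have hsum : (∑ j ∈ Finset.univ.erase i, |Amat n Δh k i j|)
          ≤ csch (k * Δh (i : ℕ)) / k + csch (k * Δh ((i : ℕ) + 1)) / k := by
        refine le_trans (Finset.sum_le_sum hle) ?_
        refine le_trans (Finset.sum_le_sum_of_subset_of_nonneg
          (Finset.subset_univ _) (fun j _ _ => by positivity)) ?_
        rw [Finset.sum_add_distrib]
        have hu1 : (∑ j : Fin n, (if (j : ℕ) + 1 = (i : ℕ)
            then csch (k * Δh (i : ℕ)) / k else 0)) ≤ csch (k * Δh (i : ℕ)) / k :=
          sum_ite_le _ (fun a b ha hb => Fin.ext (by omega)) hs1.le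
        have hu2 : (∑ j : Fin n, (if (i : ℕ) + 1 = (j : ℕ)
            then csch (k * Δh ((i : ℕ) + 1)) / k else 0)) ≤ csch (k * Δh ((i : ℕ) + 1)) / k :=
          sum_ite_le _ (fun a b ha hb => Fin.ext (by omega)) hs2.le
        linarith
      have hct1 := csch_le_coth hk hΔ1
      have hct2 := csch_le_coth hk hΔ2
      rw [hdiag]
      linarith
  exact ⟨hA, hA.det_pos, hA.isUnit⟩
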